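/- arXiv:2308.08007 — 3 statements merged into one kernel-verified Lean document; each statement's English description precedes it below -/
import Mathlib

section
/- For any real exponent p with 1 < p < 2 and any vectors ξ, η in ℝ^N with (ξ, η) ≠ (0, 0), one has (|ξ|^{p-2}ξ - |η|^{p-2}η)·(ξ - η) · (|ξ| + |η|)^{2-p} ≥ (p-1)|ξ - η|^2. -/
open Real

/-- Key scalar inequality for `B ≤ A`. -/
lemma simon_aux_bernoulli {p A B : ℝ} (hp1 : 1 < p) (hp2 : p < 2)
    (hB : 0 ≤ B) (hBA : B ≤ A) (hA : 0 < A) :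
    (p - 1) * (A - B) * (A + B) ^ (p - 2) ≤ A ^ (p - 1) - B ^ (p - 1) := by
  have h1 : (A + B) ^ (p - 2) ≤ A ^ (p - 2) :=
    Real.rpow_le_rpow_of_nonpos hA (by linarith) (by linarith)
  have hApos : (0:ℝ) < A ^ (p - 1) := Real.rpow_pos_of_pos hA _
  have hA1 : A ^ (p - 1) = A ^ (p - 2) * A := by
    rw [show p - 1 = p - 2 + 1 by ring, Real.rpow_add_one hA.ne']
  have h2 : B ^ (p - 1) ≤ A ^ (p - 1) + (p - 1) * (A ^ (p - 2) * (B - A)) := by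
    have hs : (-1:ℝ) ≤ B / A - 1 := by
      have : 0 ≤ B / A := div_nonneg hB hA.le
      linarith
    have hb := rpow_one_add_le_one_add_mul_self (s := B / A - 1) (p := p - 1)
      hs (by linarith) (by linarith)
    rw [add_sub_cancel] at hb
    have hb2 := mul_le_mul_of_nonneg_left hb hApos.le
    have hdiv : A ^ (p - 1) * (B / A) ^ (p - 1) = B ^ (p - 1) := by
      rw [Real.div_rpow hB hA.le]
      field_simp
    rw [hdiv] at hb2
    have hBA' : A ^ (p - 1) * (B / A) = A ^ (p - 2) * B := by
      rw [hA1]; field_simp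
    nlinarith [hb2, hBA']
  have hd : 0 ≤ (p - 1) * (A - B) := by nlinarith
  have := mul_le_mul_of_nonneg_left h1 hd
  nlinarith [h2, hA1]

lemma simon_aux_scalar {p A B : ℝ} (hp1 : 1 < p) (hp2 : p < 2)
    (hA : 0 ≤ A) (hB : 0 ≤ B) (hAB : 0 < A + B) :
    (p - 1) * (A - B) ^ 2 * (A + B) ^ (p - 2) ≤ (A - B) * (A ^ (p - 1) - B ^ (p - 1)) := by
  rcases le_total B A with h | h
  · have hA' : 0 < A := by linarith
    have hkey := simon_aux_bernoulli hp1 hp2 hB h hA'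
    nlinarith [mul_le_mul_of_nonneg_left hkey (sub_nonneg.2 h)]
  · have hB' : 0 < B := by linarith
    have hkey := simon_aux_bernoulli hp1 hp2 hA h hB'
    rw [add_comm B A] at hkey
    nlinarith [mul_le_mul_of_nonneg_left hkey (sub_nonneg.2 h)]

/-- Simon's inequality in the singular case `1 < p < 2` on `ℝ^N`.
Here `‖ξ‖ ^ (p - 2)` is real rpow, so `‖ξ‖ ^ (p-2) • ξ = 0` when `ξ = 0`. -/
theorem simon_inequality_p_lt_two (N : ℕ) (p : ℝ) (hp1 : 1 < p) (hp2 : p < 2)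
    (ξ η : EuclideanSpace ℝ (Fin N)) (hne : ¬(ξ = 0 ∧ η = 0)) :
    (p - 1) * ‖ξ - η‖ ^ 2 ≤
      (inner ℝ (‖ξ‖ ^ (p - 2) • ξ - ‖η‖ ^ (p - 2) • η) (ξ - η) : ℝ) *
        (‖ξ‖ + ‖η‖) ^ (2 - p) := by
  have hpow : ∀ C : ℝ, 0 < C → C ^ (p - 2) * C ^ 2 * C ^ (2 - p) = C ^ 2 := by
    intro C hC
    rw [show (C:ℝ) ^ (2:ℕ) = C ^ ((2:ℕ):ℝ) by rw [Real.rpow_natCast],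
      ← Real.rpow_add hC, ← Real.rpow_add hC]
    norm_num
  by_cases hξ : ξ = 0
  · have hη : η ≠ 0 := fun h => hne ⟨hξ, h⟩
    have hB : (0:ℝ) < ‖η‖ := norm_pos_iff.mpr hη
    simp only [hξ, norm_zero, zero_sub, zero_add, smul_zero, inner_neg_neg, norm_neg,
      real_inner_smul_left, real_inner_self_eq_norm_sq]
    have := hpow ‖η‖ hB
    nlinarith [sq_nonneg ‖η‖, Real.rpow_pos_of_pos hB (p-2), Real.rpow_pos_of_pos hB (2-p)]
  by_cases hη : η = 0
  · have hA : (0:ℝ) < ‖ξ‖ := norm_pos_iff.mpr hξ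
    simp only [hη, norm_zero, sub_zero, add_zero, smul_zero,
      real_inner_smul_left, real_inner_self_eq_norm_sq]
    have := hpow ‖ξ‖ hA
    nlinarith [sq_nonneg ‖ξ‖, Real.rpow_pos_of_pos hA (p-2), Real.rpow_pos_of_pos hA (2-p)]
  -- main case
  have hA : (0:ℝ) < ‖ξ‖ := norm_pos_iff.mpr hξ
  have hB : (0:ℝ) < ‖η‖ := norm_pos_iff.mpr hη
  have hnorm : ‖ξ - η‖ ^ 2 = ‖ξ‖ ^ 2 - 2 * (inner ℝ ξ η : ℝ) + ‖η‖ ^ 2 := norm_sub_sq_real ξ η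
  have hinner : (inner ℝ (‖ξ‖ ^ (p - 2) • ξ - ‖η‖ ^ (p - 2) • η) (ξ - η) : ℝ)
      = ‖ξ‖ ^ (p - 2) * ‖ξ‖ ^ 2 - (‖ξ‖ ^ (p - 2) + ‖η‖ ^ (p - 2)) * (inner ℝ ξ η : ℝ)
        + ‖η‖ ^ (p - 2) * ‖η‖ ^ 2 := by
    simp only [inner_sub_left, inner_sub_right, real_inner_smul_left,
      real_inner_self_eq_norm_sq, real_inner_comm η ξ]
    ring
  have ht' : (inner ℝ ξ η : ℝ) ≤ ‖ξ‖ * ‖η‖ := real_inner_le_norm ξ η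
  set A := ‖ξ‖ with hAdef
  set B := ‖η‖ with hBdef
  set t : ℝ := (inner ℝ ξ η : ℝ) with htdef
  have hAB : (0:ℝ) < A + B := by linarith
  have ht : t ≤ A * B := ht'
  have hA1 : A ^ (p - 1) = A ^ (p - 2) * A := by
    rw [show p - 1 = p - 2 + 1 by ring, Real.rpow_add_one hA.ne']
  have hB1 : B ^ (p - 1) = B ^ (p - 2) * B := by
    rw [show p - 1 = p - 2 + 1 by ring, Real.rpow_add_one hB.ne']
  have hA2 : A ^ (p - 2) * A ^ 2 = A ^ p := by
    rw [show (A:ℝ) ^ (2:ℕ) = A ^ ((2:ℕ):ℝ) by rw [Real.rpow_natCast], ← Real.rpow_add hA]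
    norm_num
  have hB2 : B ^ (p - 2) * B ^ 2 = B ^ p := by
    rw [show (B:ℝ) ^ (2:ℕ) = B ^ ((2:ℕ):ℝ) by rw [Real.rpow_natCast], ← Real.rpow_add hB]
    norm_num
  have hAp : A ^ p = A ^ (p - 1) * A := by
    rw [show p = p - 1 + 1 by ring, Real.rpow_add_one hA.ne']; ring_nf
  have hBp : B ^ p = B ^ (p - 1) * B := by
    rw [show p = p - 1 + 1 by ring, Real.rpow_add_one hB.ne']; ring_nf
  have hCC : (A + B) ^ (p - 2) * (A + B) ^ (2 - p) = 1 := by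
    rw [← Real.rpow_add hAB]
    norm_num
  have hCpos : (0:ℝ) < (A + B) ^ (2 - p) := Real.rpow_pos_of_pos hAB _
  have hcpos : (0:ℝ) < (A + B) ^ (p - 2) := Real.rpow_pos_of_pos hAB _
  have h2A : (A + B) ^ (p - 2) ≤ A ^ (p - 2) :=
    Real.rpow_le_rpow_of_nonpos hA (by linarith) (by linarith)
  have h2B : (A + B) ^ (p - 2) ≤ B ^ (p - 2) :=
    Real.rpow_le_rpow_of_nonpos hB (by linarith) (by linarith)
  have hbr := simon_aux_scalar hp1 hp2 hA.le hB.le hAB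
  have hslope : 2 * (p - 1) * (A + B) ^ (p - 2) ≤ A ^ (p - 2) + B ^ (p - 2) := by
    nlinarith
  have key : (p - 1) * (A ^ 2 - 2 * t + B ^ 2) * (A + B) ^ (p - 2)
      ≤ A ^ p + B ^ p - (A ^ (p - 2) + B ^ (p - 2)) * t := by
    nlinarith [mul_nonneg (sub_nonneg.2 ht) (sub_nonneg.2 hslope), hbr, hAp, hBp, hA1, hB1]
  rw [hinner, hnorm, hA2, hB2]
  calc (p - 1) * (A ^ 2 - 2 * t + B ^ 2)
      = (p - 1) * (A ^ 2 - 2 * t + B ^ 2) * (A + B) ^ (p - 2) * (A + B) ^ (2 - p) := by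
        rw [mul_assoc, hCC]; ring
    _ ≤ (A ^ p + B ^ p - (A ^ (p - 2) + B ^ (p - 2)) * t) * (A + B) ^ (2 - p) :=
        mul_le_mul_of_nonneg_right key hCpos.le
    _ = (A ^ p - (A ^ (p - 2) + B ^ (p - 2)) * t + B ^ p) * (A + B) ^ (2 - p) := by ring
end

section
/- For any p ≥ 2 and real numbers a, b: (|a|^{p-2}a - |b|^{p-2}b)(a - b) ≥ (1/2^p)|a - b|^p. -/
open Real

private lemma simon_key (p : ℝ) (hp : 2 ≤ p) (a b : ℝ) (ha : 0 < a) (hb : |b| ≤ a) :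
    2 * (|b| ^ (p - 2) * b) ≤ a ^ (p - 1) + a ^ (p - 2) * b := by
  have hane : a ≠ 0 := ne_of_gt ha
  have haa : a ^ (p - 2) * a = a ^ (p - 1) := by
    rw [show p - 1 = (p - 2) + 1 by ring, Real.rpow_add_one hane]
  rcases le_or_gt 0 b with hb0 | hb0
  · have habs : |b| = b := abs_of_nonneg hb0
    rw [habs]
    rcases eq_or_lt_of_le hb0 with h0 | hbpos
    · rw [← h0]
      simp
      positivity
    · have hbne : b ≠ 0 := ne_of_gt hbpos
      have hba : b ≤ a := habs ▸ hb
      have hbb : b ^ (p - 2) * b = b ^ (p - 1) := by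
        rw [show p - 1 = (p - 2) + 1 by ring, Real.rpow_add_one hbne]
      have h1 : b ^ (p - 1) ≤ a ^ (p - 1) :=
        Real.rpow_le_rpow (le_of_lt hbpos) hba (by linarith)
      have h2 : b ^ (p - 2) ≤ a ^ (p - 2) :=
        Real.rpow_le_rpow (le_of_lt hbpos) hba (by linarith)
      have h3 : b ^ (p - 2) * b ≤ a ^ (p - 2) * b :=
        mul_le_mul_of_nonneg_right h2 (le_of_lt hbpos)
      linarith [hbb ▸ h3]
  · -- b < 0
    have h1 : 2 * (|b| ^ (p - 2) * b) ≤ 0 := by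
      have : (0:ℝ) ≤ |b| ^ (p - 2) := Real.rpow_nonneg (abs_nonneg b) _
      nlinarith
    have hab : 0 ≤ a + b := by
      have : -b ≤ a := by rw [← abs_of_neg hb0]; exact hb
      linarith
    have h2 : 0 ≤ a ^ (p - 1) + a ^ (p - 2) * b := by
      have : a ^ (p - 1) + a ^ (p - 2) * b = a ^ (p - 2) * (a + b) := by
        rw [← haa]; ring
      rw [this]
      exact mul_nonneg (Real.rpow_nonneg (le_of_lt ha) _) hab
    linarith

private lemma simon_aux (p : ℝ) (hp : 2 ≤ p) (a b : ℝ) (ha : 0 ≤ a) (hb : |b| ≤ a) :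
    (1 / 2 ^ p) * |a - b| ^ p ≤ (|a| ^ (p - 2) * a - |b| ^ (p - 2) * b) * (a - b) := by
  rcases eq_or_lt_of_le ha with h0 | hapos
  · -- a = 0, hence b = 0
    have hb0 : b = 0 := by
      have : |b| ≤ 0 := h0 ▸ hb
      exact abs_nonpos_iff.mp this
    subst hb0
    rw [← h0]
    simp [Real.zero_rpow (by positivity : p ≠ 0)]
  · have hane : a ≠ 0 := ne_of_gt hapos
    have habs : |a| = a := abs_of_pos hapos
    have hba : b ≤ a := le_trans (le_abs_self b) hb
    have hsub : (0:ℝ) ≤ a - b := by linarith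
    have habsub : |a - b| = a - b := abs_of_nonneg hsub
    have haa : a ^ (p - 2) * a = a ^ (p - 1) := by
      rw [show p - 1 = (p - 2) + 1 by ring, Real.rpow_add_one hane]
    have key := simon_key p hp a b hapos hb
    -- step 2: a^(p-2)*(a-b)^2 ≤ 2 * RHS
    have step2 : a ^ (p - 2) * (a - b) ^ 2 ≤
        2 * ((|a| ^ (p - 2) * a - |b| ^ (p - 2) * b) * (a - b)) := by
      rw [habs]
      have hprod : 0 ≤ (a - b) * (a ^ (p - 1) + a ^ (p - 2) * b - 2 * (|b| ^ (p - 2) * b)) :=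
        mul_nonneg hsub (by linarith)
      have id1 : 2 * ((a ^ (p - 2) * a - |b| ^ (p - 2) * b) * (a - b)) =
          a ^ (p - 2) * (a - b) ^ 2
            + (a - b) * (a ^ (p - 2) * a + a ^ (p - 2) * b - 2 * (|b| ^ (p - 2) * b)) := by
        ring
      rw [id1, haa]
      linarith
    -- step 3: a ≥ (a-b)/2 so a^(p-2) ≥ ((a-b)/2)^(p-2)
    have h2a : a - b ≤ 2 * a := by
      have : -a ≤ b := by
        have := neg_abs_le b
        linarith
      linarith
    have hpow : ((a - b) / 2) ^ (p - 2) ≤ a ^ (p - 2) :=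
      Real.rpow_le_rpow (by positivity) (by linarith) (by linarith)
    have hdiv : ((a - b) / 2) ^ (p - 2) = (a - b) ^ (p - 2) / 2 ^ (p - 2) :=
      Real.div_rpow hsub (by norm_num : (0:ℝ) ≤ 2) (p - 2)
    -- 2^p = 2^(p-2) * 4
    have h2p : (2:ℝ) ^ p = 2 ^ (p - 2) * 4 := by
      rw [show p = (p - 2) + 2 by ring, Real.rpow_add (by norm_num : (0:ℝ) < 2)]
      norm_num
    -- |a-b|^p = (a-b)^(p-2) * (a-b)^2
    have hsplit : |a - b| ^ p = (a - b) ^ (p - 2) * (a - b) ^ 2 := by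
      rw [habsub, show p = (p - 2) + 2 by ring,
        Real.rpow_add' hsub (by intro h; linarith)]
      congr 1
      · congr 1; ring
      · norm_cast
    set T : ℝ := (2:ℝ) ^ (p - 2) with hT
    have hTpos : 0 < T := Real.rpow_pos_of_pos (by norm_num) _
    set X : ℝ := (a - b) ^ (p - 2) with hX
    have hXnn : 0 ≤ X := Real.rpow_nonneg hsub _
    set A : ℝ := a ^ (p - 2) with hA
    have hAnn : 0 ≤ A := Real.rpow_nonneg (le_of_lt hapos) _
    set S : ℝ := (a - b) ^ 2 with hS
    have hSnn : (0:ℝ) ≤ S := sq_nonneg _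
    have hXA : X ≤ T * A := by
      have : X / T ≤ A := hdiv ▸ hpow
      calc X = (X / T) * T := by field_simp
        _ ≤ A * T := mul_le_mul_of_nonneg_right this (le_of_lt hTpos)
        _ = T * A := by ring
    have chain : (1 / 2 ^ p) * |a - b| ^ p ≤ (1/2) * (A * S) := by
      rw [hsplit, h2p]
      calc (1 / (T * 4)) * (X * S) ≤ (1 / (T * 4)) * ((T * A) * S) := by
            apply mul_le_mul_of_nonneg_left _ (by positivity)
            exact mul_le_mul_of_nonneg_right hXA hSnn
        _ = (1/4) * (A * S) := by field_simp
        _ ≤ (1/2) * (A * S) := by nlinarith [mul_nonneg hAnn hSnn]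
    calc (1 / 2 ^ p) * |a - b| ^ p ≤ (1/2) * (A * S) := chain
      _ ≤ (1/2) * (2 * ((|a| ^ (p - 2) * a - |b| ^ (p - 2) * b) * (a - b))) := by
          apply mul_le_mul_of_nonneg_left _ (by norm_num)
          exact step2
      _ = (|a| ^ (p - 2) * a - |b| ^ (p - 2) * b) * (a - b) := by ring

private lemma simon_aux2 (p : ℝ) (hp : 2 ≤ p) (a b : ℝ) (hb : |b| ≤ |a|) :
    (1 / 2 ^ p) * |a - b| ^ p ≤ (|a| ^ (p - 2) * a - |b| ^ (p - 2) * b) * (a - b) := by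
  rcases le_or_gt 0 a with ha | ha
  · exact simon_aux p hp a b ha (by rwa [abs_of_nonneg ha] at hb)
  · have h := simon_aux p hp (-a) (-b) (by linarith)
      (by rw [abs_neg]; rwa [abs_of_neg ha] at hb)
    calc (1 / 2 ^ p) * |a - b| ^ p
        = (1 / 2 ^ p) * |(-a) - (-b)| ^ p := by
          rw [show (-a) - (-b) = -(a - b) by ring, abs_neg]
      _ ≤ (|-a| ^ (p - 2) * (-a) - |-b| ^ (p - 2) * (-b)) * ((-a) - (-b)) := h
      _ = (|a| ^ (p - 2) * a - |b| ^ (p - 2) * b) * (a - b) := by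
          rw [abs_neg, abs_neg]; ring

/-- One-dimensional Simon's inequality for `p ≥ 2`. -/
theorem simon_inequality_one_dim (p : ℝ) (hp : 2 ≤ p) (a b : ℝ) :
    (1 / 2 ^ p) * |a - b| ^ p ≤ (|a| ^ (p - 2) * a - |b| ^ (p - 2) * b) * (a - b) := by
  rcases le_total |b| |a| with h | h
  · exact simon_aux2 p hp a b h
  · calc (1 / 2 ^ p) * |a - b| ^ p = (1 / 2 ^ p) * |b - a| ^ p := by rw [abs_sub_comm]
      _ ≤ (|b| ^ (p - 2) * b - |a| ^ (p - 2) * a) * (b - a) := simon_aux2 p hp b a h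
      _ = (|a| ^ (p - 2) * a - |b| ^ (p - 2) * b) * (a - b) := by ring
end

section
/- Let (X, μ) be a measure space, p : X → ℝ measurable with 1 < p⁻ ≤ p(x) ≤ p⁺ ≤ 2 for a.e. x, and let h₁, h₂, h₃ ∈ L¹(X, μ) be nonnegative. Then ∫_X h₁^{p/2} (h₂^{(2−p)/2} + h₃^{(2−p)/2}) dμ ≤ C (‖h₁‖₁^{p⁺/2} + ‖h₁‖₁^{p⁻/2}) (‖h₂‖₁^{(2−p⁺)/2} + ‖h₂‖₁^{(2−p⁻)/2} + ‖h₃‖₁^{(2−p⁺)/2} + ‖h₃‖₁^{(2−p⁻)/2}) for some constant C depending only on p⁻, p⁺. -/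
open MeasureTheory

private theorem rpow_le_add_of_mem {a t t1 t2 : ℝ} (ha : 0 < a) (h1 : t1 ≤ t) (h2 : t ≤ t2) :
    a ^ t ≤ a ^ t1 + a ^ t2 := by
  rcases le_total a 1 with h | h
  · calc a ^ t ≤ a ^ t1 := Real.rpow_le_rpow_of_exponent_ge ha h h1
    _ ≤ _ := le_add_of_nonneg_right (Real.rpow_nonneg ha.le _)
  · calc a ^ t ≤ a ^ t2 := Real.rpow_le_rpow_of_exponent_le h h2
    _ ≤ _ := le_add_of_nonneg_left (Real.rpow_nonneg ha.le _)

private theorem pair_bound {X : Type} [MeasurableSpace X] (μ : Measure X) (pm pp : ℝ)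
    (hpm : 1 < pm) (hpmpp : pm ≤ pp) (hpp2 : pp ≤ 2)
    (p : X → ℝ) (hp : ∀ᵐ x ∂μ, pm ≤ p x ∧ p x ≤ pp)
    (h k : X → ℝ) (hhi : Integrable h μ) (hki : Integrable k μ)
    (hh : ∀ᵐ x ∂μ, 0 ≤ h x) (hk : ∀ᵐ x ∂μ, 0 ≤ k x) :
    ∃ g : X → ℝ, Integrable g μ ∧
      (∀ᵐ x ∂μ, h x ^ (p x / 2) * k x ^ ((2 - p x) / 2) ≤ g x) ∧
      ∫ x, g x ∂μ ≤ 2 * ((∫ x, h x ∂μ) ^ (pp / 2) + (∫ x, h x ∂μ) ^ (pm / 2)) *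
        ((∫ x, k x ∂μ) ^ ((2 - pp) / 2) + (∫ x, k x ∂μ) ^ ((2 - pm) / 2)) := by
  set A := ∫ x, h x ∂μ with hAdef
  set B := ∫ x, k x ∂μ with hBdef
  have hA0 : 0 ≤ A := integral_nonneg_of_ae (hh.mono fun x hx => hx)
  have hB0 : 0 ≤ B := integral_nonneg_of_ae (hk.mono fun x hx => hx)
  set TA := A ^ (pp / 2) + A ^ (pm / 2) with hTAdef
  set TB := B ^ ((2 - pp) / 2) + B ^ ((2 - pm) / 2) with hTBdef
  have hTA0 : 0 ≤ TA := add_nonneg (Real.rpow_nonneg hA0 _) (Real.rpow_nonneg hA0 _)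
  have hTB0 : 0 ≤ TB := add_nonneg (Real.rpow_nonneg hB0 _) (Real.rpow_nonneg hB0 _)
  have hpm0 : 0 < pm := lt_trans one_pos hpm
  have hpp0 : 0 < pp := lt_of_lt_of_le hpm0 hpmpp
  rcases hA0.eq_or_lt with hA | hA
  · -- A = 0, so h = 0 a.e.
    have hz : h =ᵐ[μ] 0 :=
      (integral_eq_zero_iff_of_nonneg_ae (hh.mono fun x hx => hx) hhi).mp hA.symm
    refine ⟨0, integrable_zero _ _ _, ?_, ?_⟩
    · filter_upwards [hz, hp] with x hx hpx
      have hne : p x / 2 ≠ 0 := ne_of_gt (by linarith [hpx.1])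
      rw [hx, Pi.zero_apply, Real.zero_rpow hne]
      simp
    · have : TA = 0 := by
        rw [hTAdef, ← hA, Real.zero_rpow (by positivity), Real.zero_rpow (by positivity)]
        ring
      simp [this]
  · rcases hB0.eq_or_lt with hB | hB
    · -- B = 0, so k = 0 a.e.
      have kz : k =ᵐ[μ] 0 :=
        (integral_eq_zero_iff_of_nonneg_ae (hk.mono fun x hx => hx) hki).mp hB.symm
      refine ⟨fun x => (0 : ℝ) ^ ((2 - pp) / 2) * h x, hhi.const_mul _, ?_, ?_⟩
      · filter_upwards [kz, hp, hh] with x hkx hpx hhx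
        rw [hkx, Pi.zero_apply]
        by_cases hpx2 : p x = 2
        · have hpp2' : pp = 2 := le_antisymm hpp2 (hpx2 ▸ hpx.2)
          rw [hpx2, hpp2']
          norm_num
        · have : 0 < (2 - p x) / 2 := by
            have := lt_of_le_of_ne (le_trans hpx.2 hpp2) hpx2
            linarith
          rw [Real.zero_rpow (ne_of_gt this), mul_zero]
          positivity
      · rw [integral_const_mul, ← hAdef]
        by_cases hpp2' : pp = 2
        · have h1 : ((0 : ℝ)) ^ ((2 - pp) / 2) = 1 := by rw [hpp2']; norm_num
          rw [h1, one_mul]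
          have hApow : A ≤ A ^ (pp / 2) := by
            rw [hpp2']; norm_num
          have hTB1 : (1 : ℝ) ≤ TB := by
            rw [hTBdef, ← hB, hpp2']
            have : ((0:ℝ)) ^ ((2 - (2:ℝ)) / 2) = 1 := by norm_num
            rw [this]
            have : (0:ℝ) ≤ (0:ℝ) ^ ((2 - pm) / 2) := Real.rpow_nonneg le_rfl _
            linarith
          have hATA : A ≤ TA := le_trans hApow
            (le_add_of_nonneg_right (Real.rpow_nonneg hA0 _))
          calc A ≤ TA := hATA
            _ = 1 * TA * 1 := by ring
            _ ≤ 2 * TA * TB := by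
                apply mul_le_mul (by nlinarith) hTB1 zero_le_one (by positivity)
        · have h0 : ((0 : ℝ)) ^ ((2 - pp) / 2) = 0 :=
            Real.zero_rpow (ne_of_gt (by
              have : pp < 2 := lt_of_le_of_ne hpp2 hpp2'
              linarith))
          rw [h0, zero_mul]
          positivity
    · -- main case A > 0, B > 0
      refine ⟨fun x => TA * TB * (h x / A + k x / B),
        (((hhi.div_const A).add (hki.div_const B)).const_mul _), ?_, ?_⟩
      · filter_upwards [hp, hh, hk] with x hpx hhx hkx
        obtain ⟨h1, h2⟩ := hpx
        set t := p x / 2 with ht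
        set s := (2 - p x) / 2 with hs
        have hts : t + s = 1 := by rw [ht, hs]; ring
        have ht0 : 0 ≤ t := by rw [ht]; linarith
        have hs0 : 0 ≤ s := by rw [hs]; linarith [le_trans h2 hpp2]
        have ht1 : t ≤ 1 := by linarith
        have hs1 : s ≤ 1 := by linarith
        have hdivh : 0 ≤ h x / A := div_nonneg hhx hA0
        have hdivk : 0 ≤ k x / B := div_nonneg hkx hB0
        have e1 : h x ^ t = A ^ t * (h x / A) ^ t := by
          rw [← Real.mul_rpow hA0 hdivh, mul_div_cancel₀ _ (ne_of_gt hA)]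
        have e2 : k x ^ s = B ^ s * (k x / B) ^ s := by
          rw [← Real.mul_rpow hB0 hdivk, mul_div_cancel₀ _ (ne_of_gt hB)]
        rw [e1, e2]
        have young : (h x / A) ^ t * (k x / B) ^ s ≤ h x / A + k x / B := by
          calc (h x / A) ^ t * (k x / B) ^ s ≤ t * (h x / A) + s * (k x / B) :=
                Real.geom_mean_le_arith_mean2_weighted ht0 hs0 hdivh hdivk hts
            _ ≤ 1 * (h x / A) + 1 * (k x / B) := by
                apply add_le_add <;> apply mul_le_mul_of_nonneg_right <;> assumption
            _ = h x / A + k x / B := by ring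
        have hAt : A ^ t ≤ TA := by
          rw [hTAdef]
          have := rpow_le_add_of_mem hA (by rw [ht]; linarith : pm / 2 ≤ t)
            (by rw [ht]; linarith : t ≤ pp / 2)
          linarith [this]
        have hBs : B ^ s ≤ TB := by
          rw [hTBdef]
          have := rpow_le_add_of_mem hB (by rw [hs]; linarith : (2 - pp) / 2 ≤ s)
            (by rw [hs]; linarith : s ≤ (2 - pm) / 2)
          linarith [this]
        calc A ^ t * (h x / A) ^ t * (B ^ s * (k x / B) ^ s)
            = (A ^ t * B ^ s) * ((h x / A) ^ t * (k x / B) ^ s) := by ring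
          _ ≤ (TA * TB) * (h x / A + k x / B) := by
              apply mul_le_mul
              · exact mul_le_mul hAt hBs (Real.rpow_nonneg hB0 _) hTA0
              · exact young
              · positivity
              · positivity
      · rw [integral_const_mul, integral_add (hhi.div_const A) (hki.div_const B),
          integral_div, integral_div, ← hAdef, ← hBdef,
          div_self (ne_of_gt hA), div_self (ne_of_gt hB)]
        ring_nf
        norm_num

/-- Variable-exponent Hölder estimate with conjugate pair `(2/p, 2/(2−p))`:
there is a constant `C` depending only on `p⁻, p⁺` bounding
`∫ h₁^{p/2}(h₂^{(2−p)/2} + h₃^{(2−p)/2}) dμ` by powers of the `L¹` norms. -/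
theorem variable_holder_s_plus_zero (pm pp : ℝ) (hpm : 1 < pm) (hpmpp : pm ≤ pp)
    (hpp2 : pp ≤ 2) :
    ∃ C : ℝ, 0 < C ∧
      ∀ (X : Type) (_ : MeasurableSpace X) (μ : Measure X) (p : X → ℝ),
        Measurable p → (∀ᵐ x ∂μ, pm ≤ p x ∧ p x ≤ pp) →
        ∀ h₁ h₂ h₃ : X → ℝ,
          Integrable h₁ μ → Integrable h₂ μ → Integrable h₃ μ →
          (∀ᵐ x ∂μ, 0 ≤ h₁ x) → (∀ᵐ x ∂μ, 0 ≤ h₂ x) → (∀ᵐ x ∂μ, 0 ≤ h₃ x) →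
          (∫ x, h₁ x ^ (p x / 2) *
              (h₂ x ^ ((2 - p x) / 2) + h₃ x ^ ((2 - p x) / 2)) ∂μ) ≤
            C * ((∫ x, h₁ x ∂μ) ^ (pp / 2) + (∫ x, h₁ x ∂μ) ^ (pm / 2)) *
              ((∫ x, h₂ x ∂μ) ^ ((2 - pp) / 2) + (∫ x, h₂ x ∂μ) ^ ((2 - pm) / 2) +
                (∫ x, h₃ x ∂μ) ^ ((2 - pp) / 2) + (∫ x, h₃ x ∂μ) ^ ((2 - pm) / 2)) := by
  refine ⟨2, two_pos, ?_⟩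
  intro X _ μ p _hpmeas hp h₁ h₂ h₃ h1i h2i h3i hh1 hh2 hh3
  obtain ⟨g₂, hg₂i, hg₂b, hg₂int⟩ :=
    pair_bound μ pm pp hpm hpmpp hpp2 p hp h₁ h₂ h1i h2i hh1 hh2
  obtain ⟨g₃, hg₃i, hg₃b, hg₃int⟩ :=
    pair_bound μ pm pp hpm hpmpp hpp2 p hp h₁ h₃ h1i h3i hh1 hh3
  have key : (∫ x, h₁ x ^ (p x / 2) *
      (h₂ x ^ ((2 - p x) / 2) + h₃ x ^ ((2 - p x) / 2)) ∂μ) ≤ ∫ x, g₂ x + g₃ x ∂μ := by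
    apply integral_mono_of_nonneg
    · filter_upwards [hh1, hh2, hh3] with x hx1 hx2 hx3
      have : (0:ℝ) ≤ h₁ x ^ (p x / 2) := Real.rpow_nonneg hx1 _
      have : (0:ℝ) ≤ h₂ x ^ ((2 - p x) / 2) := Real.rpow_nonneg hx2 _
      have : (0:ℝ) ≤ h₃ x ^ ((2 - p x) / 2) := Real.rpow_nonneg hx3 _
      positivity
    · exact hg₂i.add hg₃i
    · filter_upwards [hg₂b, hg₃b] with x hx2 hx3
      calc h₁ x ^ (p x / 2) * (h₂ x ^ ((2 - p x) / 2) + h₃ x ^ ((2 - p x) / 2))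
          = h₁ x ^ (p x / 2) * h₂ x ^ ((2 - p x) / 2) +
            h₁ x ^ (p x / 2) * h₃ x ^ ((2 - p x) / 2) := by ring
        _ ≤ g₂ x + g₃ x := add_le_add hx2 hx3
  rw [integral_add hg₂i hg₃i] at key
  calc (∫ x, h₁ x ^ (p x / 2) *
      (h₂ x ^ ((2 - p x) / 2) + h₃ x ^ ((2 - p x) / 2)) ∂μ)
      ≤ (∫ x, g₂ x ∂μ) + ∫ x, g₃ x ∂μ := key
    _ ≤ 2 * ((∫ x, h₁ x ∂μ) ^ (pp / 2) + (∫ x, h₁ x ∂μ) ^ (pm / 2)) *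
          ((∫ x, h₂ x ∂μ) ^ ((2 - pp) / 2) + (∫ x, h₂ x ∂μ) ^ ((2 - pm) / 2)) +
        2 * ((∫ x, h₁ x ∂μ) ^ (pp / 2) + (∫ x, h₁ x ∂μ) ^ (pm / 2)) *
          ((∫ x, h₃ x ∂μ) ^ ((2 - pp) / 2) + (∫ x, h₃ x ∂μ) ^ ((2 - pm) / 2)) :=
        add_le_add hg₂int hg₃int
    _ = _ := by ring
end
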